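/- Let $\mathit{\Gamma}$ be a connected digraph with at least one arc, let $H$ be a finite group acting on $\mathit{\Gamma}$ by automorphisms, and suppose $\mathit{\Gamma}$ is $H$-vertex-transitive and $(H,k)$-arc-transitive for every $k$ with $1 \leq k \leq s$, where $s \geq 1$. Let $L$ be a normal subgroup of $H$ that is transitive on the vertex set, let $v$ be a vertex, and suppose $L_v$ has a normal subgroup $A$ isomorphic to the cyclic group $\mathrm{C}_m$ for some integer $m \geq 2$. If there exists a prime divisor $r$ of $m$ such that $r$ does not divide the index $[L_v : A]$ and $v_r(|H|/|L|) < v_r(m)$ (where $v_r$ denotes the $r$-adic valuation), then $s \leq 1$. -/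

import Mathlib

open Subgroup MulAction

/-- `Γ` is `(H,s)`-arc-transitive: `H` is transitive on the set of `s`-arcs. -/
def ArcTrans (H : Type*) {V : Type*} [Group H] [MulAction H V]
    (r : V → V → Prop) (s : ℕ) : Prop :=
  ∀ a b : Fin (s + 1) → V, (∀ i : Fin s, r (a i.castSucc) (a i.succ)) →
    (∀ i : Fin s, r (b i.castSucc) (b i.succ)) → ∃ h : H, ∀ i, h • a i = b i

theorem aux_cyclic_card_unique {G : Type*} [Group G] [Finite G] [IsCyclic G]
    {K K' : Subgroup G} (h : Nat.card K = Nat.card K') : K = K' := by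
  classical
  cases nonempty_fintype G
  have key : ∀ (K : Subgroup G) (n : ℕ), 0 < n → Nat.card K = n →
      (K : Set G).toFinset = ({a : G | a ^ n = 1} : Finset G) := by
    intro K n hn hKn
    have hsub : (K : Set G).toFinset ⊆ ({a : G | a ^ n = 1} : Finset G) := by
      intro x hx
      rw [Set.mem_toFinset] at hx
      have hx1 : (⟨x, hx⟩ : K) ^ n = 1 := by
        rw [← hKn]; exact pow_card_eq_one'
      have : x ^ n = 1 := by
        have := congrArg (Subtype.val) hx1
        simpa using this
      simpa using this
    have hcard : ({a : G | a ^ n = 1} : Finset G).card ≤ n := IsCyclic.card_pow_eq_one_le hn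
    have hcard2 : (K : Set G).toFinset.card = n := by
      rw [Set.toFinset_card, ← Nat.card_eq_fintype_card]
      simpa using hKn
    exact Finset.eq_of_subset_of_card_le hsub (by omega)
  have h1 : 0 < Nat.card K := Nat.card_pos
  have e1 := key K (Nat.card K) h1 rfl
  have e2 := key K' (Nat.card K) h1 h.symm
  apply SetLike.coe_injective
  have := e1.trans e2.symm
  rwa [Set.toFinset_inj] at this

theorem aux_unique_in {H : Type*} [Group H] [Finite H] {C D1 D2 : Subgroup H}
    (hcyc : IsCyclic C) (h1 : D1 ≤ C) (h2 : D2 ≤ C)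
    (hc : Nat.card D1 = Nat.card D2) : D1 = D2 := by
  haveI := hcyc
  have key : D1.subgroupOf C = D2.subgroupOf C := by
    apply aux_cyclic_card_unique
    rw [Nat.card_congr (subgroupOfEquivOfLe h1).toEquiv,
      Nat.card_congr (subgroupOfEquivOfLe h2).toEquiv]
    exact hc
  ext x
  constructor
  · intro hx
    have : (⟨x, h1 hx⟩ : C) ∈ D1.subgroupOf C := by rwa [mem_subgroupOf]
    rw [key, mem_subgroupOf] at this; exact this
  · intro hx
    have : (⟨x, h2 hx⟩ : C) ∈ D2.subgroupOf C := by rwa [mem_subgroupOf]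
    rw [← key, mem_subgroupOf] at this; exact this

theorem s_le_one_of_normal_Cm {V H : Type*} [Fintype V] [Group H] [Finite H]
    [MulAction H V] [FaithfulSMul H V]
    (r : V → V → Prop) (hirr : Irreflexive r) (hanti : ∀ u w, r u w → ¬ r w u)
    (hact : ∀ (h : H) (u w : V), r u w → r (h • u) (h • w))
    (hconn : (SimpleGraph.fromRel r).Connected)
    (harc : ∃ u w : V, r u w)
    (hvt : ∀ u w : V, ∃ h : H, h • u = w)
    (s : ℕ) (hs : 1 ≤ s)
    (hkt : ∀ k, 1 ≤ k → k ≤ s → ArcTrans H r k)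
    (L : Subgroup H) (hLnorm : L.Normal)
    (hLtrans : ∀ u w : V, ∃ g ∈ L, g • u = w)
    (v : V) (m : ℕ) (hm : 2 ≤ m)
    (A : Subgroup H) (hAle : A ≤ L ⊓ MulAction.stabilizer H v)
    (hAnorm : (A.subgroupOf (L ⊓ MulAction.stabilizer H v)).Normal)
    (hAiso : Nonempty (A ≃* Multiplicative (ZMod m)))
    (p : ℕ) (hp : p.Prime) (hpm : p ∣ m)
    (hpidx : ¬ p ∣ A.relIndex (L ⊓ MulAction.stabilizer H v))
    (hpval : (L.index).factorization p < m.factorization p) :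
    s ≤ 1 := by
  classical
  by_contra hs1
  push_neg at hs1
  have hs2 : 2 ≤ s := hs1
  haveI : Fact p.Prime := ⟨hp⟩
  obtain ⟨e⟩ := hAiso
  set Lv := L ⊓ MulAction.stabilizer H v with hLvdef
  set a := m.factorization p with hadef
  set c := (L.index).factorization p with hcdef
  have hm0 : m ≠ 0 := by omega
  -- basic arc-transitivity in convenient form
  have arc1 : ∀ x y x' y', r x y → r x' y' → ∃ h : H, h • x = x' ∧ h • y = y' := by
    intro x y x' y' hxy hxy'
    obtain ⟨h, hh⟩ := hkt 1 le_rfl hs ![x, y] ![x', y']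
      (by intro i; fin_cases i; simpa using hxy)
      (by intro i; fin_cases i; simpa using hxy')
    exact ⟨h, by simpa using hh 0, by simpa using hh 1⟩
  have arc2 : ∀ x y z x' y' z', r x y → r y z → r x' y' → r y' z' →
      ∃ h : H, h • x = x' ∧ h • y = y' ∧ h • z = z' := by
    intro x y z x' y' z' h1 h2 h3 h4
    obtain ⟨h, hh⟩ := hkt 2 (by omega) hs2 ![x, y, z] ![x', y', z']
      (by intro i
          fin_cases i
          · simpa using h1
          · simpa using h2)
      (by intro i
          fin_cases i
          · simpa using h3
          · simpa using h4)
    exact ⟨h, by simpa using hh 0, by simpa using hh 1, by simpa using hh 2⟩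
  -- every vertex has in- and out-neighbours
  obtain ⟨u0, w0, h00⟩ := harc
  have out_nbr : ∀ x : V, ∃ y, r x y := by
    intro x
    obtain ⟨h, hh⟩ := hvt u0 x
    exact ⟨h • w0, hh ▸ hact h u0 w0 h00⟩
  have in_nbr : ∀ x : V, ∃ y, r y x := by
    intro x
    obtain ⟨h, hh⟩ := hvt w0 x
    exact ⟨h • u0, hh ▸ hact h u0 w0 h00⟩
  -- commutativity inside A, cyclicity
  have commA : ∀ x y : H, x ∈ A → y ∈ A → x * y = y * x := by
    intro x y hx hy
    have key : (⟨x, hx⟩ : A) * ⟨y, hy⟩ = ⟨y, hy⟩ * ⟨x, hx⟩ := by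
      apply e.injective
      rw [map_mul, map_mul, mul_comm]
    have := congrArg (Subtype.val) key
    simpa using this
  haveI cycA : IsCyclic A := isCyclic_of_surjective e.symm e.symm.surjective
  have cardA : Nat.card A = m := by
    rw [Nat.card_congr e.toEquiv]
    exact Nat.card_zmod m
  -- the p-primary part of A
  set pElt : H → Prop := fun g => ∃ k : ℕ, g ^ p ^ k = 1 with hpElt
  set R : Subgroup H :=
    { carrier := {g : H | g ∈ A ∧ pElt g}
      one_mem' := ⟨A.one_mem, 0, one_pow _⟩
      mul_mem' := by
        rintro x y ⟨hxA, k, hk⟩ ⟨hyA, l, hl⟩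
        refine ⟨A.mul_mem hxA hyA, k + l, ?_⟩
        have hcomm : Commute x y := commA x y hxA hyA
        rw [hcomm.mul_pow, pow_add, pow_mul, hk, one_pow, one_mul, mul_comm (p ^ k),
          pow_mul, hl, one_pow]
      inv_mem' := by
        rintro x ⟨hxA, k, hk⟩
        exact ⟨A.inv_mem hxA, k, by rw [inv_pow, hk, inv_one]⟩ } with hRdef
  have hRA : R ≤ A := fun g hg => hg.1
  have hRLv : R ≤ Lv := le_trans hRA hAle
  have memR : ∀ g : H, g ∈ R ↔ g ∈ A ∧ pElt g := fun g => Iff.rfl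
  haveI cycR : IsCyclic R := Subgroup.isCyclic_of_le hRA
  -- |R| = p ^ a
  have cardR : Nat.card R = p ^ a := by
    have hpgroup : IsPGroup p R := by
      intro g
      obtain ⟨k, hk⟩ := g.2.2
      exact ⟨k, by ext; simpa using hk⟩
    obtain ⟨t, ht⟩ := IsPGroup.iff_card.mp hpgroup
    have hdvdpa : p ^ a ∣ m := Nat.ordProj_dvd m p
    have hdvd1 : p ^ a ∣ Nat.card R := by
      set z : A := e.symm (Multiplicative.ofAdd (1 : ZMod m)) with hz
      have hordz : orderOf z = m := by
        rw [hz, MulEquiv.orderOf_eq e.symm, orderOf_ofAdd_eq_addOrderOf, ZMod.addOrderOf_one]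
      set x : A := z ^ (m / p ^ a) with hx
      have hordx : orderOf x = p ^ a := by
        rw [hx, orderOf_pow, hordz, Nat.gcd_eq_right (Nat.div_dvd_of_dvd hdvdpa),
          Nat.div_div_self hdvdpa hm0]
      have hordy : orderOf (x : H) = p ^ a := by
        rw [← hordx]
        exact orderOf_injective A.subtype A.subtype_injective x
      have hyR : (x : H) ∈ R := ⟨x.2, a, by rw [← hordy]; exact pow_orderOf_eq_one _⟩
      have hle : Subgroup.zpowers (x : H) ≤ R := Subgroup.zpowers_le.mpr hyR
      have := Subgroup.card_dvd_of_le hle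
      rwa [Nat.card_zpowers, hordy] at this
    have hdvd2 : Nat.card R ∣ m := cardA ▸ Subgroup.card_dvd_of_le hRA
    rw [ht] at hdvd1 hdvd2 ⊢
    have h1 : a ≤ t := (Nat.pow_dvd_pow_iff_le_right hp.one_lt).mp hdvd1
    have h2 : t ≤ a := (Nat.Prime.pow_dvd_iff_le_factorization hp hm0).mp hdvd2
    rw [le_antisymm h2 h1]
  have conjpow : ∀ (g x : H) (n : ℕ), (g * x * g⁻¹) ^ n = g * x ^ n * g⁻¹ := by
    intro g x n
    have := map_pow (MulAut.conj g) x n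
    simpa [MulAut.conj_apply] using this.symm
  -- cardinality of Lv
  have cardLv : Nat.card Lv = m * A.relIndex Lv := by
    have h1 : Nat.card (A.subgroupOf Lv) * (A.subgroupOf Lv).index = Nat.card Lv :=
      Subgroup.card_mul_index _
    rw [Nat.card_congr (subgroupOfEquivOfLe hAle).toEquiv, cardA] at h1
    exact h1.symm
  have hrelA0 : A.relIndex Lv ≠ 0 := by
    have hc0 : Nat.card Lv ≠ 0 := Nat.card_pos.ne'
    intro h0; rw [cardLv, h0, mul_zero] at hc0; exact hc0 rfl
  have hpnotrel : ¬ p ∣ R.relIndex Lv := by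
    have h1 : Nat.card (R.subgroupOf Lv) * (R.subgroupOf Lv).index = Nat.card Lv :=
      Subgroup.card_mul_index _
    rw [Nat.card_congr (subgroupOfEquivOfLe hRLv).toEquiv, cardR] at h1
    intro hdvd
    have h2 : p ^ (a + 1) ∣ Nat.card Lv := by
      rw [← h1, pow_succ]
      exact mul_dvd_mul_left _ hdvd
    have hLv0 : Nat.card Lv ≠ 0 := Nat.card_pos.ne'
    have h3 := (Nat.Prime.pow_dvd_iff_le_factorization hp hLv0).mp h2
    rw [cardLv, Nat.factorization_mul hm0 hrelA0, Finsupp.add_apply] at h3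
    have h0 : (A.relIndex Lv).factorization p = 0 :=
      Nat.factorization_eq_zero_of_not_dvd hpidx
    omega
  -- the `good` predicate: K is "the" p-primary part at vertex x
  set good : V → Subgroup H → Prop := fun x K =>
    Nat.card K = p ^ a ∧ IsCyclic K ∧
      (∀ g ∈ K, g ∈ L ∧ g • x = x ∧ pElt g) ∧
      (∀ g : H, g ∈ L → g • x = x → pElt g → g ∈ K) with hgood
  have good_v : good v R := by
    refine ⟨cardR, cycR, ?_, ?_⟩
    · intro g hg
      have hgLv : g ∈ Lv := hRLv hg
      exact ⟨hgLv.1, mem_stabilizer_iff.mp hgLv.2, hg.2⟩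
    · intro q hqL hqv hqp
      have hqLv : q ∈ Lv := ⟨hqL, mem_stabilizer_iff.mpr hqv⟩
      set R' := R.subgroupOf Lv with hR'
      haveI hR'norm : R'.Normal := by
        constructor
        intro n hn g
        rw [hR', mem_subgroupOf] at hn ⊢
        obtain ⟨hnA, k, hk⟩ := hn
        have hgA : ((g * n * g⁻¹ : Lv) : H) ∈ A := by
          have := hAnorm.conj_mem n (mem_subgroupOf.mpr hnA) g
          exact mem_subgroupOf.mp this
        refine ⟨hgA, k, ?_⟩
        have hcoe : ((g * n * g⁻¹ : Lv) : H) = (g : H) * (n : H) * (g : H)⁻¹ := by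
          push_cast; rfl
        rw [hcoe, conjpow, hk, mul_one, mul_inv_cancel]
      set q' : Lv := (⟨q, hqLv⟩ : Lv) with hq'
      obtain ⟨k, hk⟩ := hqp
      have hq'pow : q' ^ p ^ k = 1 := by
        apply Subtype.ext
        push_cast
        exact hk
      have h1 : (QuotientGroup.mk' R') q' ^ p ^ k = 1 := by
        rw [← map_pow, hq'pow, map_one]
      have h2 : orderOf ((QuotientGroup.mk' R') q') ∣ p ^ k := orderOf_dvd_of_pow_eq_one h1
      have h3 : orderOf ((QuotientGroup.mk' R') q') ∣ R.relIndex Lv :=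
        orderOf_dvd_natCard _
      have hcop : Nat.Coprime (p ^ k) (R.relIndex Lv) :=
        Nat.Coprime.pow_left k ((Nat.Prime.coprime_iff_not_dvd hp).mpr hpnotrel)
      have h4 : orderOf ((QuotientGroup.mk' R') q') = 1 :=
        Nat.eq_one_of_dvd_one (hcop ▸ Nat.dvd_gcd h2 h3)
      have h5 : (QuotientGroup.mk' R') q' = 1 := orderOf_eq_one_iff.mp h4
      have h6 : q' ∈ R' := (QuotientGroup.eq_one_iff q').mp h5
      exact mem_subgroupOf.mp h6
  -- conjugation moves good subgroups around
  have good_conj : ∀ (x : V) (K : Subgroup H) (h : H), good x K →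
      good (h • x) (K.map (MulAut.conj h).toMonoidHom) := by
    intro x K h ⟨hc, hcyc, helt, habs⟩
    refine ⟨?_, ?_, ?_, ?_⟩
    · rw [← hc]
      exact (Nat.card_congr (MulEquiv.subgroupMap (MulAut.conj h) K).toEquiv).symm
    · exact isCyclic_of_surjective (MulEquiv.subgroupMap (MulAut.conj h) K)
        (MulEquiv.subgroupMap (MulAut.conj h) K).surjective
    · rintro g ⟨t, ht, rfl⟩
      obtain ⟨htL, htx, k, hk⟩ := helt t ht
      refine ⟨hLnorm.conj_mem t htL h, ?_, k, ?_⟩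
      · show (h * t * h⁻¹) • (h • x) = h • x
        rw [mul_smul, mul_smul, inv_smul_smul, htx]
      · show (h * t * h⁻¹) ^ p ^ k = 1
        rw [conjpow, hk, mul_one, mul_inv_cancel]
    · intro g hgL hgx hgp
      have h1 : h⁻¹ * g * h ∈ L := by
        have := hLnorm.conj_mem g hgL h⁻¹
        simpa using this
      have h2 : (h⁻¹ * g * h) • x = x := by
        have : g • (h • x) = h • x := hgx
        rw [mul_smul, mul_smul, this, inv_smul_smul]
      have h3 : pElt (h⁻¹ * g * h) := by
        obtain ⟨k, hk⟩ := hgp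
        refine ⟨k, ?_⟩
        have : (h⁻¹ * g * (h⁻¹)⁻¹) ^ p ^ k = h⁻¹ * g ^ p ^ k * (h⁻¹)⁻¹ := conjpow h⁻¹ g _
        simpa [hk] using this
      have h4 := habs _ h1 h2 h3
      exact ⟨h⁻¹ * g * h, h4, by simp [MulAut.conj_apply]; group⟩
  have good_unique : ∀ (x : V) (K K' : Subgroup H), good x K → good x K' → K = K' := by
    intro x K K' hK hK'
    apply le_antisymm
    · intro g hg
      obtain ⟨hgL, hgx, hgp⟩ := hK.2.2.1 g hg
      exact hK'.2.2.2 g hgL hgx hgp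
    · intro g hg
      obtain ⟨hgL, hgx, hgp⟩ := hK'.2.2.1 g hg
      exact hK.2.2.2 g hgL hgx hgp
  have exgood : ∀ x : V, ∃ K : Subgroup H, good x K := by
    intro x
    obtain ⟨h, hh⟩ := hvt v x
    exact ⟨_, hh ▸ good_conj v R h good_v⟩
  choose RR hRR using exgood
  have RRconj : ∀ (x : V) (h : H), RR (h • x) = (RR x).map (MulAut.conj h).toMonoidHom :=
    fun x h => good_unique _ _ _ (hRR _) (good_conj x (RR x) h (hRR x))
  -- choose a 2-arc u → v → w and a shift g
  obtain ⟨u, huv⟩ := in_nbr v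
  obtain ⟨w, hvw⟩ := out_nbr v
  obtain ⟨g, hgu, hgv⟩ := arc1 u v v w huv hvw
  set D := RR v ⊓ RR w with hD
  have cardmap : ∀ (K : Subgroup H) (h : H),
      Nat.card (K.map (MulAut.conj h).toMonoidHom) = Nat.card K := fun K h =>
    (Nat.card_congr (MulEquiv.subgroupMap (MulAut.conj h) K).toEquiv).symm
  have inf_conj : ∀ x y : V, r x y → ∃ h : H,
      RR x ⊓ RR y = D.map (MulAut.conj h).toMonoidHom := by
    intro x y hxy
    obtain ⟨h, h1, h2⟩ := arc1 v w x y hvw hxy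
    refine ⟨h, ?_⟩
    rw [hD, Subgroup.map_inf _ _ _ (MulEquiv.injective _), ← RRconj, ← RRconj, h1, h2]
  have step : ∀ x y : V, r x y → (D ≤ RR x ∨ D ≤ RR y) → D ≤ RR x ⊓ RR y := by
    intro x y hxy hDor
    obtain ⟨h, hE⟩ := inf_conj x y hxy
    have hcard : Nat.card (RR x ⊓ RR y : Subgroup H) = Nat.card D := by
      rw [hE]; exact cardmap D h
    rcases hDor with hx | hx
    · exact le_of_eq (aux_unique_in (hRR x).2.1 hx inf_le_left hcard.symm)
    · exact le_of_eq (aux_unique_in (hRR y).2.1 hx inf_le_right hcard.symm)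
  have walkprop : ∀ (x y : V), (SimpleGraph.fromRel r).Walk x y → D ≤ RR x → D ≤ RR y := by
    intro x y wlk
    induction wlk with
    | nil => exact id
    | cons hadj q ih =>
      intro hx
      apply ih
      rw [SimpleGraph.fromRel_adj] at hadj
      rcases hadj.2 with hr | hr
      · exact le_trans (step _ _ hr (Or.inl hx)) inf_le_right
      · exact le_trans (step _ _ hr (Or.inr hx)) inf_le_left
  have hDle : ∀ x : V, D ≤ RR x := by
    intro x
    obtain ⟨wlk⟩ := hconn.preconnected v x
    exact walkprop v x wlk inf_le_left
  have Dbot : D = ⊥ := by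
    rw [Subgroup.eq_bot_iff_forall]
    intro gg hgg
    apply FaithfulSMul.eq_of_smul_eq_smul (α := V)
    intro x
    rw [one_smul]
    exact ((hRR x).2.2.1 gg (hDle x hgg)).2.1
  have arcInfBot : ∀ x y : V, r x y → RR x ⊓ RR y = ⊥ := by
    intro x y hxy
    obtain ⟨h, hE⟩ := inf_conj x y hxy
    rw [hE, Dbot]
    exact Subgroup.map_bot _
  -- the out-neighbourhood of v
  set Ω := {y : V // r v y} with hOm
  have hRv := hRR v
  letI smulRv : SMul (RR v) Ω := ⟨fun t y => ⟨(t : H) • (y : V), by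
    have h1 : (t : H) • v = v := (hRv.2.2.1 _ t.2).2.1
    have := hact (t : H) v y y.2
    rwa [h1] at this⟩⟩
  letI actRv : MulAction (RR v) Ω :=
    { one_smul := by
        intro y
        apply Subtype.ext
        show ((1 : RR v) : H) • (y : V) = y
        simp
      mul_smul := by
        intro t t' y
        apply Subtype.ext
        show ((t * t' : RR v) : H) • (y : V) = ((t : H)) • ((t' : H) • (y : V))
        rw [Subgroup.coe_mul, mul_smul] }
  have freeRv : ∀ y : Ω, MulAction.stabilizer (RR v) y = ⊥ := by
    intro y
    rw [Subgroup.eq_bot_iff_forall]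
    intro t ht
    rw [mem_stabilizer_iff] at ht
    have htH : (t : H) • (y : V) = y := congrArg Subtype.val ht
    have h1 : (t : H) ∈ RR v ⊓ RR y.1 := by
      refine ⟨t.2, ?_⟩
      obtain ⟨htL, htv, htp⟩ := hRv.2.2.1 _ t.2
      exact (hRR y.1).2.2.2 _ htL htH htp
    rw [arcInfBot v y.1 y.2] at h1
    apply Subtype.ext
    simpa using h1
  have hpaOm : p ^ a ∣ Nat.card Ω := by
    haveI : Fintype Ω := Fintype.ofFinite _
    haveI : Fintype (RR v) := Fintype.ofFinite _
    haveI : Fintype (Quotient (MulAction.orbitRel (RR v) Ω)) := Fintype.ofFinite _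
    haveI : ∀ b : Ω, Fintype (MulAction.stabilizer (RR v) b) := fun b => Fintype.ofFinite _
    have hsum := MulAction.card_eq_sum_card_group_div_card_stabilizer (RR v) Ω
    have hterm : ∀ ω : Quotient (MulAction.orbitRel (RR v) Ω),
        Fintype.card (RR v) / Fintype.card (MulAction.stabilizer (RR v) (ω.out)) = p ^ a := by
      intro ω
      have hb : Fintype.card (MulAction.stabilizer (RR v) (ω.out)) = 1 := by
        rw [← Nat.card_eq_fintype_card, freeRv ω.out, Subgroup.card_bot]
      rw [hb, Nat.div_one, ← Nat.card_eq_fintype_card, hRv.1]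
    rw [Nat.card_eq_fintype_card, hsum,
      Finset.sum_congr rfl (fun ω _ => hterm ω), Finset.sum_const, smul_eq_mul]
    exact dvd_mul_left _ _
  -- the pointwise stabilizer of the arc (u,v) acts transitively on Ω
  set Huv := MulAction.stabilizer H u ⊓ MulAction.stabilizer H v with hHuv
  letI smulU : SMul Huv Ω := ⟨fun t y => ⟨(t : H) • (y : V), by
    have h1 : (t : H) • v = v := mem_stabilizer_iff.mp t.2.2
    have := hact (t : H) v y y.2
    rwa [h1] at this⟩⟩
  letI actU : MulAction Huv Ω :=
    { one_smul := by
        intro y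
        apply Subtype.ext
        show ((1 : Huv) : H) • (y : V) = y
        simp
      mul_smul := by
        intro t t' y
        apply Subtype.ext
        show ((t * t' : Huv) : H) • (y : V) = ((t : H)) • ((t' : H) • (y : V))
        rw [Subgroup.coe_mul, mul_smul] }
  have transU : ∀ y y' : Ω, ∃ t : Huv, t • y = y' := by
    intro y y'
    obtain ⟨h, h1, h2, h3⟩ := arc2 u v y u v y' huv y.2 huv y'.2
    exact ⟨⟨h, mem_stabilizer_iff.mpr h1, mem_stabilizer_iff.mpr h2⟩, Subtype.ext h3⟩
  have hdvdHuv : Nat.card Ω ∣ Nat.card Huv := by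
    have horb : MulAction.orbit Huv (⟨w, hvw⟩ : Ω) = Set.univ := by
      rw [Set.eq_univ_iff_forall]
      intro y
      obtain ⟨t, ht⟩ := transU ⟨w, hvw⟩ y
      exact ⟨t, ht⟩
    have e1 : Ω ≃ (Huv ⧸ MulAction.stabilizer Huv (⟨w, hvw⟩ : Ω)) :=
      ((Equiv.Set.univ Ω).symm.trans (Equiv.setCongr horb.symm)).trans
        (MulAction.orbitEquivQuotientStabilizer Huv _)
    rw [Nat.card_congr e1, ← Subgroup.index_eq_card]
    exact Subgroup.index_dvd_card _
  set Hvw := MulAction.stabilizer H v ⊓ MulAction.stabilizer H w with hHvw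
  have cardHuvw : Nat.card Huv = Nat.card Hvw := by
    have h1 : Huv.map (MulAut.conj g).toMonoidHom = Hvw := by
      rw [hHuv, Subgroup.map_inf _ _ _ (MulEquiv.injective _),
        ← MulAction.stabilizer_smul_eq_stabilizer_map_conj,
        ← MulAction.stabilizer_smul_eq_stabilizer_map_conj, hgu, hgv]
    rw [← h1, cardmap]
  have hpaHvw : p ^ a ∣ Nat.card Hvw := cardHuvw ▸ dvd_trans hpaOm hdvdHuv
  -- a p-subgroup of order p^a fixing both v and w
  obtain ⟨Q', hQ'⟩ := Sylow.exists_subgroup_card_pow_prime (G := Hvw) p hpaHvw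
  set Q := Q'.map Hvw.subtype with hQ
  have cardQ : Nat.card Q = p ^ a := by
    rw [hQ, ← hQ']
    exact (Nat.card_congr (Subgroup.equivMapOfInjective Q' _ Hvw.subtype_injective).toEquiv).symm
  have hQle : Q ≤ Hvw := Subgroup.map_subtype_le Q'
  have hQR : RR v ⊓ Q = ⊥ := by
    rw [Subgroup.eq_bot_iff_forall]
    rintro t ⟨htR, htQ⟩
    obtain ⟨htL, htv, htp⟩ := hRv.2.2.1 t htR
    have htw : t • w = w := mem_stabilizer_iff.mp (hQle htQ).2
    have hmem : t ∈ RR v ⊓ RR w := ⟨htR, (hRR w).2.2.2 t htL htw htp⟩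
    rw [arcInfBot v w hvw] at hmem
    simpa using hmem
  -- p ^ (2a) divides |Sv|
  set Sv := MulAction.stabilizer H v with hSvdef
  have hRvSv : RR v ≤ Sv := fun t ht => mem_stabilizer_iff.mpr (hRv.2.2.1 t ht).2.1
  have hQSv : Q ≤ Sv := fun t ht => (hQle ht).1
  set R2 := (RR v).subgroupOf Sv with hR2
  haveI hR2norm : R2.Normal := by
    constructor
    intro n hn gg
    rw [hR2, mem_subgroupOf] at hn ⊢
    have h1 : (gg : H) • v = v := mem_stabilizer_iff.mp gg.2
    have h2 := RRconj v (gg : H)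
    rw [h1] at h2
    rw [h2]
    refine ⟨(n : H), hn, ?_⟩
    simp [MulAut.conj_apply]
  set Q2 := Q.subgroupOf Sv with hQ2
  have cardR2 : Nat.card R2 = p ^ a := by
    rw [hR2, Nat.card_congr (subgroupOfEquivOfLe hRvSv).toEquiv]
    exact hRv.1
  have cardQ2 : Nat.card Q2 = p ^ a := by
    rw [hQ2, Nat.card_congr (subgroupOfEquivOfLe hQSv).toEquiv]
    exact cardQ
  set psi : Q2 →* (Sv ⧸ R2) := (QuotientGroup.mk' R2).comp Q2.subtype with hpsi
  have hpsiinj : Function.Injective psi := by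
    rw [← MonoidHom.ker_eq_bot_iff]
    rw [Subgroup.eq_bot_iff_forall]
    intro t ht
    rw [MonoidHom.mem_ker] at ht
    have h6 : (t : Sv) ∈ R2 := (QuotientGroup.eq_one_iff _).mp ht
    have h1 : ((t : Sv) : H) ∈ RR v := mem_subgroupOf.mp h6
    have h2 : ((t : Sv) : H) ∈ Q := mem_subgroupOf.mp t.2
    have h3 : ((t : Sv) : H) ∈ RR v ⊓ Q := ⟨h1, h2⟩
    rw [hQR] at h3
    apply Subtype.ext
    apply Subtype.ext
    simpa using h3
  have hdvd2a : p ^ (2 * a) ∣ Nat.card Sv := by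
    have h1 : Nat.card R2 * R2.index = Nat.card Sv := Subgroup.card_mul_index R2
    have h2 : p ^ a ∣ R2.index := by
      have h3 : Nat.card psi.range ∣ Nat.card (Sv ⧸ R2) := Subgroup.card_subgroup_dvd_card _
      have h4 : Nat.card psi.range = p ^ a := by
        rw [← cardQ2]
        exact (Nat.card_congr (MonoidHom.ofInjective hpsiinj).toEquiv).symm
      rw [← h4, Subgroup.index_eq_card]
      exact h3
    calc p ^ (2 * a) = p ^ a * p ^ a := by rw [two_mul, pow_add]
    _ ∣ Nat.card R2 * R2.index := mul_dvd_mul (by rw [cardR2]) h2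
    _ = Nat.card Sv := h1
  -- upper bound on the p-valuation of |Sv|
  have hSvcard : Nat.card Sv = m * A.relIndex Lv * L.relIndex Sv := by
    have hLvSv : Lv ≤ Sv := inf_le_right
    have h1 : Nat.card (Lv.subgroupOf Sv) * (Lv.subgroupOf Sv).index = Nat.card Sv :=
      Subgroup.card_mul_index _
    rw [Nat.card_congr (subgroupOfEquivOfLe hLvSv).toEquiv, cardLv] at h1
    rw [← h1]
    congr 1
    show Lv.relIndex Sv = L.relIndex Sv
    rw [hLvdef]
    exact Subgroup.inf_relIndex_right L Sv
  have hSv0 : Nat.card Sv ≠ 0 := Nat.card_pos.ne'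
  have hLrel0 : L.relIndex Sv ≠ 0 := by
    intro h0
    rw [hSvcard, h0, mul_zero] at hSv0
    exact hSv0 rfl
  have hfin := (Nat.Prime.pow_dvd_iff_le_factorization hp hSv0).mp hdvd2a
  rw [hSvcard, Nat.factorization_mul (by exact mul_ne_zero hm0 hrelA0) hLrel0,
    Nat.factorization_mul hm0 hrelA0, Finsupp.add_apply, Finsupp.add_apply] at hfin
  have hA0 : (A.relIndex Lv).factorization p = 0 :=
    Nat.factorization_eq_zero_of_not_dvd hpidx
  have hL0 : (L.relIndex Sv).factorization p ≤ c := by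
    have hLidx0 : L.index ≠ 0 := by
      have hc := Subgroup.card_mul_index L
      intro h0
      rw [h0, mul_zero] at hc
      exact (Nat.card_pos (α := H)).ne' hc.symm
    haveI := hLnorm
    have hdvd := Subgroup.relIndex_dvd_index_of_normal (H := L) (K := Sv)
    exact (Nat.factorization_le_iff_dvd hLrel0 hLidx0).mpr hdvd p
  omega
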